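/- For all t ≥ 4, there exists a doubly saturated R(4,t)-good graph on 6t−11 vertices; specifically, the circulant graph on n = 6t−11 vertices with distance set {t−2} ∪ [2t−3, 3t−6] is doubly saturated R(4,t)-good. -/

import Mathlib

/-- The cyclic distance ‖x‖ = min(x mod n, n − (x mod n)) for x ∈ ℤ/nℤ. -/
def cyclicDist (n : ℕ) (x : ZMod n) : ℕ := min x.val (n - x.val)

/-- The circulant graph on `ZMod n` with distance set `S`: `x ~ y` iff `‖x - y‖ ∈ S`. -/
def circ (n : ℕ) (S : Set ℕ) : SimpleGraph (ZMod n) :=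
  SimpleGraph.fromRel (fun x y => cyclicDist n (x - y) ∈ S)

/-- `G` is `R(s,t)`-good: no clique of size `s` and no independent set of size `t`. -/
def RGood {V : Type*} (s t : ℕ) (G : SimpleGraph V) : Prop :=
  G.CliqueFree s ∧ Gᶜ.CliqueFree t

/-- `G` is doubly saturated `R(s,t)`-good. -/
def DoublySaturated {V : Type*} (s t : ℕ) (G : SimpleGraph V) : Prop :=
  RGood s t G ∧
  (∀ u v : V, u ≠ v → ¬ G.Adj u v → ¬ (G ⊔ SimpleGraph.edge u v).CliqueFree s) ∧
  (∀ u v : V, G.Adj u v → ¬ ((G.deleteEdges {s(u, v)})ᶜ.CliqueFree t)) ∧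
  G ≠ ⊤ ∧ Gᶜ ≠ ⊤

set_option linter.unusedSectionVars false
set_option maxHeartbeats 1600000

section aux
variable {n : ℕ} [NeZero n]

lemma castValEq (x : ZMod n) : ((x.val : ℕ) : ZMod n) = x := ZMod.natCast_rightInverse x

lemma valSub (b c : ℕ) (hb : b < n) (hc : c < n) :
    ((b : ZMod n) - (c : ZMod n)).val = if c ≤ b then b - c else b + n - c := by
  rcases le_or_gt c b with h | h
  · have he : ((b : ZMod n) - (c : ZMod n)) = ((b - c : ℕ) : ZMod n) := by
      push_cast [Nat.cast_sub h]; ring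
    rw [he, ZMod.val_cast_of_lt (by omega)]
    simp [h]
  · have he : ((b : ZMod n) - (c : ZMod n)) = ((n - (c - b) : ℕ) : ZMod n) := by
      push_cast [Nat.cast_sub (by omega : c - b ≤ n), Nat.cast_sub (le_of_lt h)]
      simp [ZMod.natCast_self]
    rw [he, ZMod.val_cast_of_lt (by omega), if_neg (by omega)]
    omega

lemma valSubComm {x y : ZMod n} (h : x ≠ y) : (x - y).val + (y - x).val = n := by
  have h1 : x - y ≠ 0 := sub_ne_zero.mpr h
  have h2 : y - x = -(x - y) := by ring
  rw [h2, ZMod.neg_val, if_neg h1]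
  have := ZMod.val_lt (x - y)
  omega

lemma valNeZero {x y : ZMod n} (h : x ≠ y) : (x - y).val ≠ 0 := by
  intro h0
  exact h (sub_eq_zero.mp ((ZMod.val_eq_zero _).mp h0))

lemma cocycle (u v w : ZMod n) :
    (u - w).val = (u - v).val + (v - w).val ∨
    (u - w).val + n = (u - v).val + (v - w).val := by
  have he : u - w = (u - v) + (v - w) := by ring
  have h1 := ZMod.val_lt (u - v)
  have h2 := ZMod.val_lt (v - w)
  have h3 := ZMod.val_add (u - v) (v - w)
  rw [← he] at h3
  rcases lt_or_ge ((u - v).val + (v - w).val) n with h | h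
  · left; rw [h3, Nat.mod_eq_of_lt h]
  · right
    rw [h3, Nat.mod_eq_sub_mod h, Nat.mod_eq_of_lt (by omega)]
    omega


lemma adjIff (a : ℕ) (ha : 2 ≤ a) (x y : ZMod (6*a+1)) :
    (circ (6*a+1) ({a} ∪ Set.Icc (2*a+1) (3*a))).Adj x y ↔
      x ≠ y ∧ ((x-y).val = a ∨ (x-y).val = 5*a+1 ∨
        (2*a+1 ≤ (x-y).val ∧ (x-y).val ≤ 4*a)) := by
  haveI : NeZero (6*a+1) := ⟨by omega⟩
  rw [circ, SimpleGraph.fromRel_adj]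
  refine and_congr_right fun hxy => ?_
  have hsum : (x-y).val + (y-x).val = 6*a+1 := valSubComm hxy
  have h1 : (x-y).val < 6*a+1 := ZMod.val_lt _
  simp only [cyclicDist, Set.mem_union, Set.mem_singleton_iff, Set.mem_Icc]
  omega

lemma cliqueOfMap {n : ℕ} [NeZero n] (G' : SimpleGraph (ZMod n)) (p : ZMod n)
    (g : ℕ → ℕ) (m : ℕ)
    (hlt : ∀ i < m, g i < n)
    (hinj : ∀ i, i < m → ∀ j, j < m → i < j → g i ≠ g j)
    (hadj : ∀ i, i < m → ∀ j, j < m → i < j →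
      G'.Adj (p + ((g i : ℕ) : ZMod n)) (p + ((g j : ℕ) : ZMod n))) :
    ¬ G'.CliqueFree m := by
  intro hcf
  have hinj' : ∀ i, i < m → ∀ j, j < m →
      p + ((g i : ℕ) : ZMod n) = p + ((g j : ℕ) : ZMod n) → i = j := by
    intro i hi j hj h
    have h2 : ((g i : ℕ) : ZMod n) = ((g j : ℕ) : ZMod n) := add_left_cancel h
    have h3 : g i = g j := by
      have := congrArg ZMod.val h2
      rwa [ZMod.val_cast_of_lt (hlt i hi), ZMod.val_cast_of_lt (hlt j hj)] at this
    rcases lt_trichotomy i j with h' | h' | h'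
    · exact absurd h3 (hinj i hi j hj h')
    · exact h'
    · exact absurd h3.symm (hinj j hj i hi h')
  apply hcf ((Finset.range m).image fun i => p + ((g i : ℕ) : ZMod n))
  constructor
  · rw [SimpleGraph.isClique_iff]
    intro x hx y hy hxy
    simp only [Finset.coe_image, Set.mem_image, Finset.mem_coe, Finset.coe_range,
      Set.mem_Iio] at hx hy
    obtain ⟨i, hi, rfl⟩ := hx
    obtain ⟨j, hj, rfl⟩ := hy
    rcases lt_trichotomy i j with h' | h' | h'
    · exact hadj i hi j hj h'
    · exact absurd (by rw [h']) hxy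
    · exact (hadj j hj i hi h').symm
  · rw [Finset.card_image_of_injOn, Finset.card_range]
    intro i hi j hj h
    simp only [Finset.coe_range, Set.mem_Iio] at hi hj
    exact hinj' i hi j hj h

lemma existsBot {α : Type*} (r : α → α → Prop) (s : Finset α) (hne : s.Nonempty)
    (htot : ∀ x ∈ s, ∀ y ∈ s, x ≠ y → r x y ∨ r y x)
    (htr : ∀ x ∈ s, ∀ y ∈ s, ∀ z ∈ s, r x y → r y z → r x z) :
    ∃ c ∈ s, ∀ x ∈ s, x ≠ c → r c x := by
  classical
  induction s using Finset.cons_induction with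
  | empty => exact absurd hne (by simp)
  | cons b s hb ih =>
    rcases s.eq_empty_or_nonempty with rfl | hne'
    · refine ⟨b, by simp, ?_⟩
      intro x hx hxb
      simp only [Finset.cons_empty, Finset.mem_singleton] at hx
      exact absurd hx hxb
    · have hsub : ∀ x ∈ s, x ∈ Finset.cons b s hb := fun x hx => by
        simp [Finset.mem_cons, hx]
      obtain ⟨c, hc, hmin⟩ := ih hne'
        (fun x hx y hy => htot x (hsub x hx) y (hsub y hy))
        (fun x hx y hy z hz => htr x (hsub x hx) y (hsub y hy) z (hsub z hz))
      by_cases hrcb : r c b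
      · refine ⟨c, hsub c hc, ?_⟩
        intro x hx hxc
        rcases Finset.mem_cons.mp hx with rfl | hx'
        · exact hrcb
        · exact hmin x hx' hxc
      · have hbc : b ≠ c := fun h => hb (h ▸ hc)
        have hrbc : r b c :=
          (htot b (Finset.mem_cons_self b s) c (hsub c hc) hbc).resolve_right hrcb
        refine ⟨b, Finset.mem_cons_self b s, ?_⟩
        intro x hx hxb
        rcases Finset.mem_cons.mp hx with rfl | hx'
        · exact absurd rfl hxb
        · by_cases hxc : x = c
          · exact hxc ▸ hrbc
          · exact htr b (Finset.mem_cons_self b s) c (hsub c hc) x hx hrbc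
              (hmin x hx' hxc)

lemma cliqueFree4 (a : ℕ) (ha : 2 ≤ a) :
    (circ (6*a+1) ({a} ∪ Set.Icc (2*a+1) (3*a))).CliqueFree 4 := by
  haveI : NeZero (6*a+1) := ⟨by omega⟩
  intro T hT
  have hA : ∀ x ∈ T, ∀ y ∈ T, x ≠ y →
      ((x-y).val = a ∨ (x-y).val = 5*a+1 ∨
        (2*a+1 ≤ (x-y).val ∧ (x-y).val ≤ 4*a)) := by
    intro x hx y hy hxy
    exact ((adjIff a ha x y).mp (hT.1 (Finset.mem_coe.mpr hx) (Finset.mem_coe.mpr hy) hxy)).2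
  obtain ⟨x1, s1, h1n, rfl, h1c⟩ := Finset.card_eq_succ.mp hT.2
  obtain ⟨x2, s2, h2n, rfl, h2c⟩ := Finset.card_eq_succ.mp h1c
  obtain ⟨x3, s3, h3n, rfl, h3c⟩ := Finset.card_eq_succ.mp h2c
  simp only [Finset.mem_insert, not_or] at h1n h2n
  have hm1 : x1 ∈ insert x1 (insert x2 (insert x3 s3)) := by simp
  have hm2 : x2 ∈ insert x1 (insert x2 (insert x3 s3)) := by simp
  have hm3 : x3 ∈ insert x1 (insert x2 (insert x3 s3)) := by simp
  obtain ⟨x4, s4, h4n, h4e, h4c⟩ := Finset.card_eq_succ.mp h3c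
  have hm4 : x4 ∈ insert x1 (insert x2 (insert x3 s3)) := by
    simp [← h4e]
  have hne14 : x1 ≠ x4 := by
    intro h; exact h1n.2.2 (by rw [h, ← h4e]; simp)
  have hne24 : x2 ≠ x4 := by
    intro h; exact h2n.2 (by rw [h, ← h4e]; simp)
  have hne34 : x3 ≠ x4 := by
    intro h; exact h3n (by rw [h, ← h4e]; simp)
  have H12 := hA x1 hm1 x2 hm2 h1n.1
  have H13 := hA x1 hm1 x3 hm3 h1n.2.1
  have H14 := hA x1 hm1 x4 hm4 hne14
  have H23 := hA x2 hm2 x3 hm3 h2n.1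
  have H24 := hA x2 hm2 x4 hm4 hne24
  have H34 := hA x3 hm3 x4 hm4 hne34
  have b12 : (x1-x2).val < 6*a+1 := ZMod.val_lt _
  have b13 : (x1-x3).val < 6*a+1 := ZMod.val_lt _
  have b14 : (x1-x4).val < 6*a+1 := ZMod.val_lt _
  have b23 : (x2-x3).val < 6*a+1 := ZMod.val_lt _
  have b24 : (x2-x4).val < 6*a+1 := ZMod.val_lt _
  have b34 : (x3-x4).val < 6*a+1 := ZMod.val_lt _
  have c123 := cocycle x1 x2 x3
  have c124 := cocycle x1 x2 x4
  have c134 := cocycle x1 x3 x4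
  have c234 := cocycle x2 x3 x4
  omega


lemma indepFree (a : ℕ) (ha : 2 ≤ a) :
    (circ (6*a+1) ({a} ∪ Set.Icc (2*a+1) (3*a)))ᶜ.CliqueFree (a+2) := by
  haveI : NeZero (6*a+1) := ⟨by omega⟩
  intro T hT
  have hP : ∀ x ∈ T, ∀ y ∈ T, x ≠ y →
      ((x-y).val ≠ a ∧ (x-y).val ≠ 5*a+1 ∧
        ¬(2*a+1 ≤ (x-y).val ∧ (x-y).val ≤ 4*a)) := by
    intro x hx y hy hxy
    have hc := hT.1 (Finset.mem_coe.mpr hx) (Finset.mem_coe.mpr hy) hxy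
    rw [SimpleGraph.compl_adj] at hc
    have := hc.2
    rw [adjIff a ha x y] at this
    push_neg at this
    rcases (this hxy : _) with ⟨h1, h2, h3⟩
    exact ⟨h1, h2, fun hh => by omega⟩
  have hne : T.Nonempty := by
    rw [← Finset.card_pos, hT.2]; omega
  set r : ZMod (6*a+1) → ZMod (6*a+1) → Prop :=
    fun x y => 1 ≤ (y-x).val ∧ (y-x).val ≤ 2*a with hr
  have htot : ∀ x ∈ T, ∀ y ∈ T, x ≠ y → r x y ∨ r y x := by
    intro x hx y hy hxy
    have h1 := hP x hx y hy hxy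
    have h2 := hP y hy x hx hxy.symm
    have hsum := valSubComm hxy
    have hw : (x-y).val < 6*a+1 := ZMod.val_lt _
    have hw' : (y-x).val < 6*a+1 := ZMod.val_lt _
    simp only [hr]
    omega
  have htr : ∀ x ∈ T, ∀ y ∈ T, ∀ z ∈ T, r x y → r y z → r x z := by
    intro x hx y hy z hz hxy hyz
    simp only [hr] at hxy hyz ⊢
    have hxz : x ≠ z := by
      intro h
      subst h
      have h1 := valSubComm (x := x) (y := y) ?_
      · omega
      · intro h'; subst h'; simp at hxy
    have hc := cocycle z y x
    have h1 := hP z hz x hx hxz.symm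
    omega
  obtain ⟨c, hc, hmin⟩ := existsBot r T hne htot htr
  have hf : ∀ x ∈ T, (x - c).val ≤ 2*a := by
    intro x hx
    by_cases hxc : x = c
    · subst hxc; simp
    · exact (hmin x hx hxc).2
  have hkey : ∀ x ∈ T, ∀ y ∈ T, x ≠ y →
      (x-c).val ≠ (y-c).val ∧ (x-c).val ≠ (y-c).val + a ∧ (y-c).val ≠ (x-c).val + a := by
    intro x hx y hy hxy
    have h1 := hP x hx y hy hxy
    have h2 := hP y hy x hx hxy.symm
    have hsum := valSubComm hxy
    have hc1 := cocycle x y c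
    have hc2 := cocycle y x c
    have hb1 := hf x hx
    have hb2 := hf y hy
    have hnz := valNeZero hxy
    have hw : (x-y).val < 6*a+1 := ZMod.val_lt _
    have hw' : (y-x).val < 6*a+1 := ZMod.val_lt _
    omega
  have hcard : T.card ≤ (Finset.range (a+1)).card := by
    apply Finset.card_le_card_of_injOn
      (fun x => if a < (x - c).val then (x - c).val - a else (x - c).val)
    · intro x hx
      have := hf x hx
      simp only [Finset.mem_coe, Finset.mem_range]
      split_ifs <;> omega
    · intro x hx y hy h
      simp only [Finset.mem_coe] at hx hy
      by_contra hxy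
      have := hkey x hx y hy hxy
      simp only at h
      split_ifs at h <;> omega
  rw [hT.2, Finset.card_range] at hcard
  omega

def gAdd (a d i : ℕ) : ℕ :=
  if i = 0 then 0 else if i = 1 then d
  else if i = 2 then (if d < a then 2*a+1+d else a+d)
  else (if d < a then 3*a+1+d else 5*a+1)

lemma addSat (a : ℕ) (ha : 2 ≤ a) (u v : ZMod (6*a+1)) (huv : u ≠ v)
    (hnadj : ¬ (circ (6*a+1) ({a} ∪ Set.Icc (2*a+1) (3*a))).Adj u v) :
    ¬ ((circ (6*a+1) ({a} ∪ Set.Icc (2*a+1) (3*a))) ⊔ SimpleGraph.edge u v).CliqueFree 4 := by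
  haveI : NeZero (6*a+1) := ⟨by omega⟩
  have H1 : ¬((u-v).val = a ∨ (u-v).val = 5*a+1 ∨
      (2*a+1 ≤ (u-v).val ∧ (u-v).val ≤ 4*a)) :=
    fun h => hnadj ((adjIff a ha u v).mpr ⟨huv, h⟩)
  have H2 : ¬((v-u).val = a ∨ (v-u).val = 5*a+1 ∨
      (2*a+1 ≤ (v-u).val ∧ (v-u).val ≤ 4*a)) :=
    fun h => hnadj ((adjIff a ha v u).mpr ⟨huv.symm, h⟩).symm
  have hsum := valSubComm huv
  have hb1 : (u-v).val < 6*a+1 := ZMod.val_lt _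
  have hnz : (u-v).val ≠ 0 := valNeZero huv
  have hnz' : (v-u).val ≠ 0 := valNeZero huv.symm
  obtain ⟨p, d, hd1, hd2, hdna, hpq⟩ :
      ∃ p d, 1 ≤ d ∧ d ≤ 2*a ∧ d ≠ a ∧
        ((p = u ∧ p + ((d : ℕ) : ZMod (6*a+1)) = v) ∨
         (p = v ∧ p + ((d : ℕ) : ZMod (6*a+1)) = u)) := by
    rcases le_or_gt ((v-u).val) (2*a) with h | h
    · refine ⟨u, (v-u).val, by omega, h, by omega, Or.inl ⟨rfl, ?_⟩⟩
      rw [castValEq]; ring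
    · refine ⟨v, (u-v).val, by omega, by omega, by omega, Or.inr ⟨rfl, ?_⟩⟩
      rw [castValEq]; ring
  have key : ∀ i, i < 4 → ∀ j, j < 4 → i < j →
      gAdd a d i < 6*a+1 ∧ gAdd a d j < 6*a+1 ∧ gAdd a d i ≠ gAdd a d j ∧
      ((i = 0 ∧ j = 1) ∨
        ((if gAdd a d j ≤ gAdd a d i then gAdd a d i - gAdd a d j
            else gAdd a d i + (6*a+1) - gAdd a d j) = a ∨
         (if gAdd a d j ≤ gAdd a d i then gAdd a d i - gAdd a d j
            else gAdd a d i + (6*a+1) - gAdd a d j) = 5*a+1 ∨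
         (2*a+1 ≤ (if gAdd a d j ≤ gAdd a d i then gAdd a d i - gAdd a d j
            else gAdd a d i + (6*a+1) - gAdd a d j) ∧
          (if gAdd a d j ≤ gAdd a d i then gAdd a d i - gAdd a d j
            else gAdd a d i + (6*a+1) - gAdd a d j) ≤ 4*a))) := by
    intro i hi j hj hij
    unfold gAdd
    split_ifs <;> omega
  apply cliqueOfMap _ p (gAdd a d) 4
  · intro i hi
    unfold gAdd; split_ifs <;> omega
  · intro i hi j hj hij
    exact (key i hi j hj hij).2.2.1
  · intro i hi j hj hij
    obtain ⟨hbi, hbj, hgne, hc⟩ := key i hi j hj hij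
    have hxy : p + ((gAdd a d i : ℕ) : ZMod (6*a+1)) ≠ p + ((gAdd a d j : ℕ) : ZMod (6*a+1)) := by
      intro h
      apply hgne
      have h2 := add_left_cancel h
      have h3 := congrArg ZMod.val h2
      rwa [ZMod.val_cast_of_lt hbi, ZMod.val_cast_of_lt hbj] at h3
    rcases hc with ⟨hi0, hj1⟩ | hcond
    · subst hi0; subst hj1
      rw [SimpleGraph.sup_adj]; right
      rw [SimpleGraph.edge_adj]
      refine ⟨?_, hxy⟩
      have hg0 : gAdd a d 0 = 0 := by simp [gAdd]
      have hg1 : gAdd a d 1 = d := by simp [gAdd]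
      rw [hg0, hg1]
      simpa using hpq
    · rw [SimpleGraph.sup_adj]; left
      rw [adjIff a ha]
      refine ⟨hxy, ?_⟩
      have hrw : (p + ((gAdd a d i : ℕ) : ZMod (6*a+1))) - (p + ((gAdd a d j : ℕ) : ZMod (6*a+1)))
          = ((gAdd a d i : ℕ) : ZMod (6*a+1)) - ((gAdd a d j : ℕ) : ZMod (6*a+1)) := by ring
      rw [hrw, valSub _ _ hbi hbj]
      exact hcond


def gDel (a e i : ℕ) : ℕ :=
  if e = a then (if i = 0 then 0 else if i = 1 then a else if i = 2 then 6*a else a + i - 2)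
  else if e ≤ 3*a - 1 then (if i = 0 then 0 else if i = 1 then e else if i = 2 then 2*a
    else if i < a + 2 - (e - (2*a+1)) then i + (e - (2*a+1)) - 2 else i + (e - (2*a+1)) - 1)
  else (if i = 0 then 0 else if i = 1 then 3*a else 4*a + i - 1)

lemma delSat (a : ℕ) (ha : 2 ≤ a) (u v : ZMod (6*a+1))
    (huv : (circ (6*a+1) ({a} ∪ Set.Icc (2*a+1) (3*a))).Adj u v) :
    ¬ ((((circ (6*a+1) ({a} ∪ Set.Icc (2*a+1) (3*a))).deleteEdges {s(u, v)})ᶜ).CliqueFree (a+2)) := by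
  haveI : NeZero (6*a+1) := ⟨by omega⟩
  obtain ⟨hne, hw⟩ := (adjIff a ha u v).mp huv
  have hsum := valSubComm hne
  have hb1 : (u-v).val < 6*a+1 := ZMod.val_lt _
  obtain ⟨p, e, he, hs⟩ :
      ∃ p e, (e = a ∨ (2*a+1 ≤ e ∧ e ≤ 3*a)) ∧
        s(u, v) = s(p, p + ((e : ℕ) : ZMod (6*a+1))) := by
    have hcv : u = v + (((u-v).val : ℕ) : ZMod (6*a+1)) := by rw [castValEq]; ring
    have hcu : v = u + (((v-u).val : ℕ) : ZMod (6*a+1)) := by rw [castValEq]; ring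
    have hsum2 := valSubComm hne.symm
    rcases hw with h | h | h
    · refine ⟨v, a, Or.inl rfl, ?_⟩
      have hca : ((a : ℕ) : ZMod (6*a+1)) = (((u-v).val : ℕ) : ZMod (6*a+1)) := by rw [h]
      rw [hca, ← hcv, Sym2.eq_swap]
    · refine ⟨u, (v-u).val, Or.inl (by omega), by rw [← hcu]⟩
    · rcases le_or_gt ((u-v).val) (3*a) with h' | h'
      · refine ⟨v, (u-v).val, Or.inr (by omega), by rw [← hcv, Sym2.eq_swap]⟩
      · refine ⟨u, (v-u).val, Or.inr (by omega), by rw [← hcu]⟩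
  have hea : e ≤ 3*a := by omega
  have key : ∀ i, i < a+2 → ∀ j, j < a+2 → i < j →
      gDel a e i < 6*a+1 ∧ gDel a e j < 6*a+1 ∧ gDel a e i ≠ gDel a e j ∧
      ((i = 0 ∧ j = 1) ∨
        ¬((if gDel a e j ≤ gDel a e i then gDel a e i - gDel a e j
            else gDel a e i + (6*a+1) - gDel a e j) = a ∨
          (if gDel a e j ≤ gDel a e i then gDel a e i - gDel a e j
            else gDel a e i + (6*a+1) - gDel a e j) = 5*a+1 ∨
          (2*a+1 ≤ (if gDel a e j ≤ gDel a e i then gDel a e i - gDel a e j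
            else gDel a e i + (6*a+1) - gDel a e j) ∧
           (if gDel a e j ≤ gDel a e i then gDel a e i - gDel a e j
            else gDel a e i + (6*a+1) - gDel a e j) ≤ 4*a))) := by
    intro i hi j hj hij
    unfold gDel
    split_ifs <;> omega
  rw [hs]
  apply cliqueOfMap _ p (gDel a e) (a+2)
  · intro i hi
    unfold gDel; split_ifs <;> omega
  · intro i hi j hj hij
    exact (key i hi j hj hij).2.2.1
  · intro i hi j hj hij
    obtain ⟨hbi, hbj, hgne, hc⟩ := key i hi j hj hij
    have hxy : p + ((gDel a e i : ℕ) : ZMod (6*a+1)) ≠ p + ((gDel a e j : ℕ) : ZMod (6*a+1)) := by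
      intro h
      apply hgne
      have h2 := add_left_cancel h
      have h3 := congrArg ZMod.val h2
      rwa [ZMod.val_cast_of_lt hbi, ZMod.val_cast_of_lt hbj] at h3
    rw [SimpleGraph.compl_adj]
    refine ⟨hxy, ?_⟩
    rw [SimpleGraph.deleteEdges_adj]
    rcases hc with ⟨hi0, hj1⟩ | hcond
    · subst hi0; subst hj1
      rintro ⟨-, hmem⟩
      apply hmem
      have hg0 : gDel a e 0 = 0 := by norm_num [gDel]
      have hg1 : gDel a e 1 = e := by norm_num [gDel]; split_ifs <;> omega
      rw [hg0, hg1]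
      simp
    · rintro ⟨hadj, -⟩
      obtain ⟨-, hvals⟩ := (adjIff a ha _ _).mp hadj
      have hrw : (p + ((gDel a e i : ℕ) : ZMod (6*a+1))) - (p + ((gDel a e j : ℕ) : ZMod (6*a+1)))
          = ((gDel a e i : ℕ) : ZMod (6*a+1)) - ((gDel a e j : ℕ) : ZMod (6*a+1)) := by ring
      rw [hrw, valSub _ _ hbi hbj] at hvals
      exact hcond hvals

theorem stmt_0 (t : ℕ) (ht : 4 ≤ t) :
    DoublySaturated 4 t (circ (6 * t - 11) ({t - 2} ∪ Set.Icc (2 * t - 3) (3 * t - 6))) := by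
  obtain ⟨a, rfl⟩ : ∃ a, t = a + 2 := ⟨t - 2, by omega⟩
  have ha : 2 ≤ a := by omega
  have e1 : 6 * (a + 2) - 11 = 6*a+1 := by omega
  have e2 : (a + 2) - 2 = a := by omega
  have e3 : 2 * (a + 2) - 3 = 2*a+1 := by omega
  have e4 : 3 * (a + 2) - 6 = 3*a := by omega
  rw [e1, e2, e3, e4]
  haveI : NeZero (6*a+1) := ⟨by omega⟩
  refine ⟨⟨cliqueFree4 a ha, indepFree a ha⟩, ?_, ?_, ?_, ?_⟩
  · exact fun u v huv hnadj => addSat a ha u v huv hnadj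
  · exact fun u v huv => delSat a ha u v huv
  · intro hG
    have h01 : (0 : ZMod (6*a+1)) ≠ 1 := by
      intro h
      have h2 := congrArg ZMod.val h
      rw [ZMod.val_zero, show (1 : ZMod (6*a+1)) = ((1:ℕ) : ZMod (6*a+1)) by norm_num,
        ZMod.val_cast_of_lt (by omega)] at h2
      omega
    have hadj : (circ (6*a+1) ({a} ∪ Set.Icc (2*a+1) (3*a))).Adj 0 1 := by
      rw [hG]
      exact (SimpleGraph.top_adj _ _).mpr h01
    rw [adjIff a ha] at hadj
    have hv : ((0 : ZMod (6*a+1)) - 1).val = 6*a := by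
      rw [show (0 : ZMod (6*a+1)) = ((0:ℕ) : ZMod (6*a+1)) by norm_num,
        show (1 : ZMod (6*a+1)) = ((1:ℕ) : ZMod (6*a+1)) by norm_num,
        valSub 0 1 (by omega) (by omega), if_neg (by omega)]
      omega
    have := hadj.2
    omega
  · intro hG
    have h0a : (0 : ZMod (6*a+1)) ≠ ((a:ℕ) : ZMod (6*a+1)) := by
      intro h
      have h2 := congrArg ZMod.val h
      rw [ZMod.val_zero, ZMod.val_cast_of_lt (by omega)] at h2
      omega
    have hadj : (circ (6*a+1) ({a} ∪ Set.Icc (2*a+1) (3*a))).Adj 0 ((a:ℕ) : ZMod (6*a+1)) := by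
      rw [adjIff a ha]
      refine ⟨h0a, ?_⟩
      have hv : ((0 : ZMod (6*a+1)) - ((a:ℕ) : ZMod (6*a+1))).val = 5*a+1 := by
        rw [show (0 : ZMod (6*a+1)) = ((0:ℕ) : ZMod (6*a+1)) by norm_num,
          valSub 0 a (by omega) (by omega), if_neg (by omega)]
        omega
      omega
    have h2 : (circ (6*a+1) ({a} ∪ Set.Icc (2*a+1) (3*a)))ᶜ.Adj 0 ((a:ℕ) : ZMod (6*a+1)) := by
      rw [hG]
      exact (SimpleGraph.top_adj _ _).mpr h0a
    rw [SimpleGraph.compl_adj] at h2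
    exact h2.2 hadj
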